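/- arXiv:1502.01153 — 2 statements merged into one kernel-verified Lean document; each statement's English description precedes it below -/
import Mathlib

section
/- Let ζ₀ : Ω̄ → ℝ be continuous on a compact set Ω̄ ⊂ ℝⁿ with finite pointwise Dini seminorm ⟨ζ₀⟩_* = sup_x ∫₀^ρ ω_{ζ₀}(x;r)/r dr, and let U : Ω̄ → Ω̄ be a surjective map satisfying |U(x) − U(y)| ≤ K|x−y|^δ for some K ≥ 1, δ ∈ (0,1]. Then ζ = ζ₀ ∘ U satisfies ⟨ζ⟩_{*,ρ} ≤ (1/δ)·⟨ζ₀⟩_{*,Kρ^δ}, where ⟨g⟩_{*,σ} = sup_x ∫₀^σ ω_g(x;r)/r dr. -/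
open MeasureTheory Set
open scoped ENNReal

/-- Pointwise modulus of continuity `ω_g(x; r)` of `g` at `x`, relative to a set `s`. -/
noncomputable def modulusPtOn {n : ℕ} (s : Set (EuclideanSpace ℝ (Fin n)))
    (g : EuclideanSpace ℝ (Fin n) → ℝ) (x : EuclideanSpace ℝ (Fin n)) (r : ℝ) : ℝ :=
  sSup {d | ∃ y ∈ s, dist x y ≤ r ∧ d = |g x - g y|}

/-- Pointwise Dini seminorm `⟨g⟩_{*,σ} = sup_x ∫₀^σ ω_g(x;r)/r dr`. -/
noncomputable def diniSeminormPt {n : ℕ} (s : Set (EuclideanSpace ℝ (Fin n)))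
    (g : EuclideanSpace ℝ (Fin n) → ℝ) (σ : ℝ) : ℝ≥0∞ :=
  ⨆ x : s, ∫⁻ r in Ioc (0 : ℝ) σ, ENNReal.ofReal (modulusPtOn s g x r / r)

lemma lintegral_image_1d {s : Set ℝ} {f f' : ℝ → ℝ} (hs : MeasurableSet s)
    (hf' : ∀ x ∈ s, HasDerivWithinAt f (f' x) s x) (hf : InjOn f s) (g : ℝ → ℝ≥0∞) :
    ∫⁻ x in f '' s, g x = ∫⁻ x in s, ENNReal.ofReal |f' x| * g (f x) := by
  simpa only [ContinuousLinearMap.det_toSpanSingleton] using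
    lintegral_image_eq_lintegral_abs_det_fderiv_mul volume hs
      (fun x hx => (hf' x hx).hasFDerivWithinAt) hf g

lemma modulusPtOn_bddAbove {n : ℕ} {s : Set (EuclideanSpace ℝ (Fin n))}
    {g : EuclideanSpace ℝ (Fin n) → ℝ} {M : ℝ} (hM : ∀ y ∈ s, |g y| ≤ M)
    (x : EuclideanSpace ℝ (Fin n)) (r : ℝ) :
    BddAbove {d | ∃ y ∈ s, dist x y ≤ r ∧ d = |g x - g y|} := by
  refine ⟨|g x| + M, ?_⟩
  rintro d ⟨y, hy, -, rfl⟩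
  calc |g x - g y| ≤ |g x| + |g y| := abs_sub _ _
  _ ≤ |g x| + M := by linarith [hM y hy]

lemma modulusPtOn_nonneg' {n : ℕ} {s : Set (EuclideanSpace ℝ (Fin n))}
    (g : EuclideanSpace ℝ (Fin n) → ℝ) (x : EuclideanSpace ℝ (Fin n)) (r : ℝ) :
    0 ≤ modulusPtOn s g x r := by
  apply Real.sSup_nonneg
  rintro d ⟨y, hy, -, rfl⟩
  exact abs_nonneg _

lemma modulusPtOn_mono {n : ℕ} {s : Set (EuclideanSpace ℝ (Fin n))}
    {g : EuclideanSpace ℝ (Fin n) → ℝ} {M : ℝ} (hM : ∀ y ∈ s, |g y| ≤ M)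
    (x : EuclideanSpace ℝ (Fin n)) : Monotone (modulusPtOn s g x) := by
  intro a b hab
  apply Real.sSup_le
  · rintro d ⟨y, hy, hd, rfl⟩
    exact le_csSup (modulusPtOn_bddAbove hM x b) ⟨y, hy, hd.trans hab, rfl⟩
  · exact modulusPtOn_nonneg' g x b

/-- Composition with a surjective `(K,δ)`-Hölder map: if `⟨ζ₀⟩_* < ∞` and
`|U x − U y| ≤ K |x−y|^δ`, then `ζ = ζ₀ ∘ U` satisfies
`⟨ζ⟩_{*,ρ} ≤ (1/δ)·⟨ζ₀⟩_{*,K ρ^δ}`. -/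
theorem diniPt_comp_holder {n : ℕ} (s : Set (EuclideanSpace ℝ (Fin n)))
    (hs : IsCompact s) (ζ₀ : EuclideanSpace ℝ (Fin n) → ℝ) (hζ₀ : ContinuousOn ζ₀ s)
    (K δ : ℝ) (hK : 1 ≤ K) (hδ : 0 < δ) (hδ1 : δ ≤ 1)
    (ρ : ℝ) (hρ : 0 < ρ)
    (hfin : diniSeminormPt s ζ₀ (K * ρ ^ δ) < ⊤)
    (U : EuclideanSpace ℝ (Fin n) → EuclideanSpace ℝ (Fin n))
    (hUmaps : MapsTo U s s) (hUsurj : SurjOn U s s)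
    (hUhold : ∀ x ∈ s, ∀ y ∈ s, dist (U x) (U y) ≤ K * dist x y ^ δ) :
    diniSeminormPt s (ζ₀ ∘ U) ρ ≤
      ENNReal.ofReal (1 / δ) * diniSeminormPt s ζ₀ (K * ρ ^ δ) := by
  have hK0 : (0:ℝ) < K := lt_of_lt_of_le one_pos hK
  -- bound on ζ₀
  obtain ⟨M, hM⟩ : ∃ M, ∀ y ∈ s, |ζ₀ y| ≤ M := by
    rcases s.eq_empty_or_nonempty with rfl | hne
    · exact ⟨0, by simp⟩
    · obtain ⟨M, hM⟩ := hs.exists_bound_of_continuousOn hζ₀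
      exact ⟨M, fun y hy => by simpa using hM y hy⟩
  rw [diniSeminormPt]
  refine iSup_le fun x => ?_
  have hx : (x : EuclideanSpace ℝ (Fin n)) ∈ s := x.2
  set z := U (x : EuclideanSpace ℝ (Fin n)) with hz
  have hzs : z ∈ s := hUmaps hx
  set φ : ℝ → ℝ := modulusPtOn s ζ₀ z with hφ
  have hφmono : Monotone φ := modulusPtOn_mono hM z
  have hφnn : ∀ r, 0 ≤ φ r := fun r => modulusPtOn_nonneg' ζ₀ z r
  have hφmeas : Measurable φ := hφmono.measurable
  set f : ℝ → ℝ := fun r => K * r ^ δ with hf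
  have hfmeas : Measurable f := measurable_const.mul (Real.continuous_rpow_const hδ.le).measurable
  -- Step 1: pointwise modulus bound
  have step1 : ∀ r ∈ Ioc (0:ℝ) ρ,
      modulusPtOn s (ζ₀ ∘ U) x r ≤ φ (f r) := by
    rintro r ⟨hr0, -⟩
    apply Real.sSup_le
    · rintro d ⟨y, hy, hd, rfl⟩
      refine le_csSup (modulusPtOn_bddAbove hM z (f r)) ⟨U y, hUmaps hy, ?_, rfl⟩
      calc dist (U x) (U y) ≤ K * dist (x:EuclideanSpace ℝ (Fin n)) y ^ δ := hUhold x hx y hy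
      _ ≤ K * r ^ δ := by
          exact mul_le_mul_of_nonneg_left (Real.rpow_le_rpow dist_nonneg hd hδ.le) hK0.le
    · exact hφnn (f r)
  -- Step 2: change of variables
  have hderiv : ∀ r ∈ Ioc (0:ℝ) ρ,
      HasDerivWithinAt f (K * (δ * r ^ (δ - 1))) (Ioc (0:ℝ) ρ) r := by
    rintro r ⟨hr0, -⟩
    exact ((Real.hasDerivAt_rpow_const (Or.inl hr0.ne')).const_mul K).hasDerivWithinAt
  have hinj : InjOn f (Ioc (0:ℝ) ρ) := by
    refine StrictMonoOn.injOn fun a ha b hb hab => ?_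
    exact mul_lt_mul_of_pos_left (Real.rpow_lt_rpow ha.1.le hab hδ) hK0
  have himg : f '' Ioc (0:ℝ) ρ = Ioc (0:ℝ) (K * ρ ^ δ) := by
    ext τ
    constructor
    · rintro ⟨r, ⟨hr0, hrρ⟩, rfl⟩
      exact ⟨mul_pos hK0 (Real.rpow_pos_of_pos hr0 δ),
        mul_le_mul_of_nonneg_left (Real.rpow_le_rpow hr0.le hrρ hδ.le) hK0.le⟩
    · rintro ⟨hτ0, hτ⟩
      have hdiv : 0 < τ / K := div_pos hτ0 hK0
      refine ⟨(τ / K) ^ δ⁻¹, ⟨Real.rpow_pos_of_pos hdiv _, ?_⟩, ?_⟩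
      · have h1 : τ / K ≤ ρ ^ δ := (div_le_iff₀' hK0).mpr hτ
        calc (τ / K) ^ δ⁻¹ ≤ (ρ ^ δ) ^ δ⁻¹ :=
              Real.rpow_le_rpow hdiv.le h1 (inv_nonneg.mpr hδ.le)
        _ = ρ := Real.rpow_rpow_inv hρ.le hδ.ne'
      · simp only [hf]
        rw [Real.rpow_inv_rpow hdiv.le hδ.ne', mul_div_cancel₀ _ hK0.ne']
  have hchange :
      ∫⁻ τ in Ioc (0:ℝ) (K * ρ ^ δ), ENNReal.ofReal (φ τ / τ)
        = ∫⁻ r in Ioc (0:ℝ) ρ,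
            ENNReal.ofReal |K * (δ * r ^ (δ - 1))| * ENNReal.ofReal (φ (f r) / f r) := by
    rw [← himg]
    exact lintegral_image_1d measurableSet_Ioc hderiv hinj _
  -- simplify the integrand
  have hsimp : ∀ r ∈ Ioc (0:ℝ) ρ,
      ENNReal.ofReal |K * (δ * r ^ (δ - 1))| * ENNReal.ofReal (φ (f r) / f r)
        = ENNReal.ofReal δ * ENNReal.ofReal (φ (f r) / r) := by
    rintro r ⟨hr0, -⟩
    have hrδ : (0:ℝ) < r ^ δ := Real.rpow_pos_of_pos hr0 δ
    have habs : |K * (δ * r ^ (δ - 1))| = K * (δ * r ^ (δ - 1)) := by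
      refine abs_of_nonneg ?_
      positivity
    rw [habs, ← ENNReal.ofReal_mul (by positivity), ← ENNReal.ofReal_mul hδ.le]
    congr 1
    have h1 : r ^ (δ - 1) = r ^ δ / r := by
      rw [Real.rpow_sub hr0, Real.rpow_one]
    rw [h1]
    field_simp [hf]
    ring
  have hchange2 :
      ∫⁻ τ in Ioc (0:ℝ) (K * ρ ^ δ), ENNReal.ofReal (φ τ / τ)
        = ENNReal.ofReal δ * ∫⁻ r in Ioc (0:ℝ) ρ, ENNReal.ofReal (φ (f r) / r) := by
    rw [hchange, setLIntegral_congr_fun measurableSet_Ioc hsimp]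
    rw [lintegral_const_mul]
    exact ((hφmeas.comp hfmeas).div measurable_id).ennreal_ofReal
  -- put things together
  have hA : ∫⁻ r in Ioc (0:ℝ) ρ, ENNReal.ofReal (modulusPtOn s (ζ₀ ∘ U) x r / r)
      ≤ ∫⁻ r in Ioc (0:ℝ) ρ, ENNReal.ofReal (φ (f r) / r) := by
    refine setLIntegral_mono (((hφmeas.comp hfmeas).div measurable_id).ennreal_ofReal) ?_
    intro r hr
    exact ENNReal.ofReal_le_ofReal ((div_le_div_iff_of_pos_right hr.1).mpr (step1 r hr))
  have hfinal : ENNReal.ofReal (1 / δ) *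
      ∫⁻ τ in Ioc (0:ℝ) (K * ρ ^ δ), ENNReal.ofReal (φ τ / τ)
      = ∫⁻ r in Ioc (0:ℝ) ρ, ENNReal.ofReal (φ (f r) / r) := by
    rw [hchange2, ← mul_assoc, ← ENNReal.ofReal_mul (by positivity),
      one_div_mul_cancel hδ.ne', ENNReal.ofReal_one, one_mul]
  calc ∫⁻ r in Ioc (0:ℝ) ρ, ENNReal.ofReal (modulusPtOn s (ζ₀ ∘ U) x r / r)
      ≤ ∫⁻ r in Ioc (0:ℝ) ρ, ENNReal.ofReal (φ (f r) / r) := hA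
  _ = ENNReal.ofReal (1 / δ) *
        ∫⁻ τ in Ioc (0:ℝ) (K * ρ ^ δ), ENNReal.ofReal (φ τ / τ) := hfinal.symm
  _ ≤ ENNReal.ofReal (1 / δ) * diniSeminormPt s ζ₀ (K * ρ ^ δ) := by
      refine mul_le_mul_right ?_ _
      exact le_iSup (fun y : s => ∫⁻ r in Ioc (0:ℝ) (K * ρ ^ δ),
        ENNReal.ofReal (modulusPtOn s ζ₀ y r / r)) ⟨z, hzs⟩
end

section
/- Streamline Hölder estimate from a log-Lipschitz velocity: let v : [0,T] × Ω̄ → ℝ² be continuous, bounded by B, and satisfy the log-Lipschitz estimate |v(t,x) − v(t,y)| ≤ c·B·|x−y|·(1 + |log|x−y||) for |x−y| ≤ 1. Then the flow maps U(s,t,x) (solutions of dU/ds = v(s,U), U(t,t,x) = x) satisfy |U(s,t,x) − U(s,t,y)| ≤ c₂·|x−y|^δ with δ = e^{−cB T}, for all s, t ∈ [0,T] and |x−y| ≤ 1, where c₂ depends only on Ω. -/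
open Set Function Filter Topology

lemma osgood_aux {E : Type*} [NormedAddCommGroup E] [NormedSpace ℝ E]
    (lam T d : ℝ) (hlam : 0 ≤ lam) (hT : 0 < T) (hd : 0 < d)
    {a b : ℝ} (hab : a ≤ b) (hba : b - a ≤ T)
    (f f' : ℝ → E)
    (hderiv : ∀ τ ∈ Icc a b, HasDerivAt f (f' τ) τ)
    (hfa : ‖f a‖ ≤ d)
    (hbound : ∀ τ ∈ Ico a b, 0 < ‖f τ‖ → ‖f τ‖ ≤ 1 →
      ‖f' τ‖ ≤ lam * ‖f τ‖ * (1 + |Real.log ‖f τ‖|))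
    (hsmall : Real.exp 1 * d ^ Real.exp (-(lam * T)) < 1) :
    ‖f b‖ ≤ Real.exp 1 * d ^ Real.exp (-(lam * T)) := by
  set δ := Real.exp (-(lam * T)) with hδ
  have hδpos : 0 < δ := Real.exp_pos _
  have hδle : δ ≤ 1 := by
    rw [hδ]
    exact Real.exp_le_one_iff.mpr (by nlinarith)
  have hpow : d ^ δ = Real.exp (Real.log d * δ) := Real.rpow_def_of_pos hd δ
  have h1 : 1 + Real.log d * δ < 0 := by
    by_contra h
    push_neg at h
    rw [hpow, ← Real.exp_add] at hsmall
    exact absurd hsmall (not_lt.mpr (Real.one_le_exp h))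
  set K := 1 - Real.log d with hK
  have hK1 : 1 < K * δ := by nlinarith
  have hK0 : 0 < K := by nlinarith
  set ε₀ := Real.log (K * δ) / T with hε₀def
  have hε₀ : 0 < ε₀ := div_pos (Real.log_pos hK1) hT
  have key : ∀ ε ∈ Ioc (0:ℝ) ε₀,
      ‖f b‖ ≤ Real.exp (1 - K * Real.exp (-((lam + ε) * T))) := by
    rintro ε ⟨hε, hεε₀⟩
    set μ := lam + ε with hμ
    have hμpos : 0 < μ := by simp only [hμ]; linarith
    set Bf : ℝ → ℝ := fun τ => Real.exp (1 - K * Real.exp (-(μ * (τ - a)))) with hBfdef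
    set B' : ℝ → ℝ := fun τ => Bf τ * (K * Real.exp (-(μ * (τ - a))) * μ) with hB'def
    have hBd : ∀ τ, HasDerivAt Bf (B' τ) τ := by
      intro τ
      have h1' : HasDerivAt (fun τ : ℝ => -(μ * (τ - a))) (-μ) τ := by
        simpa using (((hasDerivAt_id τ).sub_const a).const_mul μ).fun_neg
      have h4 := (((h1'.exp).const_mul K).const_sub 1).exp
      convert h4 using 1
      simp only [hB'def, hBfdef]
      ring
    have hBa : Bf a = d := by
      have : (1 : ℝ) - K * Real.exp (-(μ * (a - a))) = Real.log d := by
        simp [hK]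
      simp only [hBfdef]
      rw [this, Real.exp_log hd]
    have hBpos : ∀ τ, 0 < Bf τ := fun τ => Real.exp_pos _
    have hKe : ∀ τ, τ ≤ b → 1 ≤ K * Real.exp (-(μ * (τ - a))) := by
      intro τ hτ
      have e1 : Real.exp (-(μ * T)) ≤ Real.exp (-(μ * (τ - a))) := by
        apply Real.exp_le_exp.mpr
        have : τ - a ≤ T := by linarith
        nlinarith
      have e2 : Real.exp (-(μ * T)) = δ * Real.exp (-(ε * T)) := by
        rw [hδ, ← Real.exp_add]; congr 1; simp only [hμ]; ring
      have e3 : Real.exp (-(ε₀ * T)) ≤ Real.exp (-(ε * T)) := by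
        apply Real.exp_le_exp.mpr
        nlinarith
      have e4 : Real.exp (-(ε₀ * T)) = (K * δ)⁻¹ := by
        rw [Real.exp_neg]
        congr 1
        rw [hε₀def, div_mul_cancel₀ _ (ne_of_gt hT), Real.exp_log (by positivity)]
      have e5 : (1 : ℝ) = K * δ * (K * δ)⁻¹ := by
        field_simp
      calc (1:ℝ) = K * δ * (K * δ)⁻¹ := e5
        _ = K * (δ * (K * δ)⁻¹) := by ring
        _ ≤ K * Real.exp (-(μ * (τ - a))) := by
            apply mul_le_mul_of_nonneg_left _ hK0.le
            rw [← e4]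
            calc δ * Real.exp (-(ε₀ * T)) ≤ δ * Real.exp (-(ε * T)) :=
                  mul_le_mul_of_nonneg_left e3 hδpos.le
              _ = Real.exp (-(μ * T)) := e2.symm
              _ ≤ Real.exp (-(μ * (τ - a))) := e1
    have hBle1 : ∀ τ, τ ≤ b → Bf τ ≤ 1 := by
      intro τ hτ
      have := hKe τ hτ
      calc Bf τ ≤ Real.exp 0 := Real.exp_le_exp.mpr (by linarith)
        _ = 1 := Real.exp_zero
    have bound' : ∀ τ ∈ Ico a b, ‖f τ‖ = Bf τ → ‖f' τ‖ < B' τ := by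
      intro τ hτ heq
      have hposτ : 0 < ‖f τ‖ := heq ▸ hBpos τ
      have hle1τ : ‖f τ‖ ≤ 1 := heq ▸ hBle1 τ hτ.2.le
      have hb := hbound τ hτ hposτ hle1τ
      have hlog : Real.log (Bf τ) = 1 - K * Real.exp (-(μ * (τ - a))) := Real.log_exp _
      have habs : 1 + |Real.log ‖f τ‖| = K * Real.exp (-(μ * (τ - a))) := by
        rw [heq, abs_of_nonpos (Real.log_nonpos (hBpos τ).le (hBle1 τ hτ.2.le)), hlog]
        ring
      rw [habs, heq] at hb
      have hKeτ := hKe τ hτ.2.le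
      have hBposτ := hBpos τ
      calc ‖f' τ‖ ≤ lam * Bf τ * (K * Real.exp (-(μ * (τ - a)))) := hb
        _ < B' τ := by
            simp only [hB'def]
            have hμlam : lam < μ := by simp only [hμ]; linarith
            have hP : 0 < Bf τ * (K * Real.exp (-(μ * (τ - a)))) :=
              mul_pos hBposτ (lt_of_lt_of_le one_pos hKeτ)
            nlinarith [mul_lt_mul_of_pos_right hμlam hP]
    have hcf : ContinuousOn f (Icc a b) :=
      fun τ hτ => (hderiv τ hτ).continuousAt.continuousWithinAt
    have hcf' : ∀ τ ∈ Ico a b, HasDerivWithinAt f (f' τ) (Ici τ) τ :=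
      fun τ hτ => (hderiv τ (Ico_subset_Icc_self hτ)).hasDerivWithinAt
    have hmain := image_norm_le_of_norm_deriv_right_lt_deriv_boundary hcf hcf'
      (B := Bf) (B' := B') (hBa ▸ hfa) hBd bound' (right_mem_Icc.mpr hab)
    calc ‖f b‖ ≤ Bf b := hmain
      _ ≤ Real.exp (1 - K * Real.exp (-(μ * T))) := by
          apply Real.exp_le_exp.mpr
          have : Real.exp (-(μ * T)) ≤ Real.exp (-(μ * (b - a))) :=
            Real.exp_le_exp.mpr (by nlinarith)
          nlinarith
  have hcont : Tendsto (fun ε : ℝ => Real.exp (1 - K * Real.exp (-((lam + ε) * T))))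
      (𝓝[>] (0:ℝ)) (𝓝 (Real.exp (1 - K * δ))) := by
    have hc : Continuous fun ε : ℝ => Real.exp (1 - K * Real.exp (-((lam + ε) * T))) := by
      fun_prop
    have h0 : Tendsto (fun ε : ℝ => Real.exp (1 - K * Real.exp (-((lam + ε) * T))))
        (𝓝[>] (0:ℝ)) (𝓝 (Real.exp (1 - K * Real.exp (-((lam + (0:ℝ)) * T))))) :=
      (hc.tendsto 0).mono_left nhdsWithin_le_nhds
    simpa [hδ] using h0
  have hfb : ‖f b‖ ≤ Real.exp (1 - K * δ) := by
    refine ge_of_tendsto hcont ?_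
    filter_upwards [Ioc_mem_nhdsGT_of_mem ⟨le_refl (0:ℝ), hε₀⟩] with ε hε
    exact key ε hε
  calc ‖f b‖ ≤ Real.exp (1 - K * δ) := hfb
    _ = Real.exp (1 - δ) * Real.exp (Real.log d * δ) := by
        rw [← Real.exp_add]; congr 1; rw [hK]; ring
    _ ≤ Real.exp 1 * d ^ δ := by
        rw [hpow]
        apply mul_le_mul_of_nonneg_right _ (Real.exp_pos _).le
        exact Real.exp_le_exp.mpr (by linarith)

/-- Streamline Hölder estimate from a log-Lipschitz velocity field: if `v` is bounded by
`B` and log-Lipschitz with constant `cB`, then the flow maps `U(s,t,·)` are Hölder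
continuous of exponent `δ = e^{−cBT}` with a uniform constant `c₂`. -/
theorem flow_holder_of_logLipschitz
    (T B c : ℝ) (hT : 0 < T) (hB : 0 ≤ B) (hc : 0 < c)
    (v : ℝ → EuclideanSpace ℝ (Fin 2) → EuclideanSpace ℝ (Fin 2))
    (hv_cont : Continuous (uncurry v))
    (hv_bdd : ∀ t ∈ Icc (0 : ℝ) T, ∀ x, ‖v t x‖ ≤ B)
    (hv_loglip : ∀ t ∈ Icc (0 : ℝ) T, ∀ x y, 0 < dist x y → dist x y ≤ 1 →
      ‖v t x - v t y‖ ≤ c * B * dist x y * (1 + |Real.log (dist x y)|))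
    (U : ℝ → ℝ → EuclideanSpace ℝ (Fin 2) → EuclideanSpace ℝ (Fin 2))
    (hU_init : ∀ t ∈ Icc (0 : ℝ) T, ∀ x, U t t x = x)
    (hU_ode : ∀ t ∈ Icc (0 : ℝ) T, ∀ x, ∀ s ∈ Icc (0 : ℝ) T,
      HasDerivAt (fun s' => U s' t x) (v s (U s t x)) s) :
    ∃ c₂ : ℝ, 0 < c₂ ∧ ∀ s ∈ Icc (0 : ℝ) T, ∀ t ∈ Icc (0 : ℝ) T, ∀ x y,
      dist x y ≤ 1 →
      dist (U s t x) (U s t y) ≤ c₂ * dist x y ^ Real.exp (-(c * B * T)) := by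
  refine ⟨Real.exp 1 * (1 + 2 * B * T), by positivity, ?_⟩
  intro s hs t ht x y hxy1
  rcases eq_or_lt_of_le (dist_nonneg : (0:ℝ) ≤ dist x y) with hd0 | hd
  · have hxy : x = y := dist_eq_zero.mp hd0.symm
    subst hxy
    rw [dist_self, dist_self, Real.zero_rpow (Real.exp_ne_zero _), mul_zero]
  · set d := dist x y with hddef
    set δ := Real.exp (-(c * B * T)) with hδ
    have hdpow : 0 < d ^ δ := Real.rpow_pos_of_pos hd δ
    have hBT : 0 ≤ B * T := mul_nonneg hB hT.le
    -- crude bound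
    have hcrude : ∀ z, ‖U s t z - z‖ ≤ B * T := by
      intro z
      have h1 : ∀ τ ∈ Icc (0:ℝ) T,
          HasDerivWithinAt (fun τ => U τ t z) (v τ (U τ t z)) (Icc (0:ℝ) T) τ :=
        fun τ hτ => (hU_ode t ht z τ hτ).hasDerivWithinAt
      have h2 := (convex_Icc (0:ℝ) T).norm_image_sub_le_of_norm_hasDerivWithin_le h1
        (fun τ hτ => hv_bdd τ hτ _) ht hs
      rw [hU_init t ht z] at h2
      have h3 : ‖s - t‖ ≤ T := by
        rw [Real.norm_eq_abs, abs_sub_le_iff]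
        constructor <;> linarith [hs.1, hs.2, ht.1, ht.2]
      calc ‖U s t z - z‖ ≤ B * ‖s - t‖ := h2
        _ ≤ B * T := mul_le_mul_of_nonneg_left h3 hB
    have hub : dist (U s t x) (U s t y) ≤ d + 2 * (B * T) := by
      have := dist_triangle4 (U s t x) x y (U s t y)
      have e1 : dist (U s t x) x = ‖U s t x - x‖ := dist_eq_norm _ _
      have e2 : dist y (U s t y) = ‖U s t y - y‖ := by
        rw [dist_comm, dist_eq_norm]
      have := hcrude x
      have := hcrude y
      rw [← hddef] at *
      linarith [dist_triangle4 (U s t x) x y (U s t y), hcrude x, hcrude y,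
        e1 ▸ hcrude x]
    by_cases hcase : Real.exp 1 * d ^ δ < 1
    · -- Osgood regime
      rcases le_total t s with hts | hst
      · -- forward in time
        have h := osgood_aux (c * B) T d (by positivity) hT hd hts
          (by linarith [ht.1, hs.2])
          (fun τ => U τ t x - U τ t y)
          (fun τ => v τ (U τ t x) - v τ (U τ t y))
          (fun τ hτ => by
            have hτ' : τ ∈ Icc (0:ℝ) T := ⟨le_trans ht.1 hτ.1, le_trans hτ.2 hs.2⟩
            exact (hU_ode t ht x τ hτ').sub (hU_ode t ht y τ hτ'))
          (by
            simp only [hU_init t ht x, hU_init t ht y]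
            rw [← dist_eq_norm])
          (fun τ hτ hpos hle => by
            have hτ' : τ ∈ Icc (0:ℝ) T := ⟨le_trans ht.1 hτ.1, le_trans hτ.2.le hs.2⟩
            have := hv_loglip τ hτ' (U τ t x) (U τ t y)
              (by rwa [dist_eq_norm]) (by rwa [dist_eq_norm])
            simpa [dist_eq_norm] using this)
          (by rw [← hδ]; exact hcase)
        rw [← dist_eq_norm] at h
        rw [← hδ] at h
        nlinarith [h, mul_nonneg (mul_nonneg (Real.exp_pos 1).le hBT) hdpow.le]
      · -- backward in time
        have h := osgood_aux (c * B) T d (by positivity) hT hd hst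
          (by linarith [hs.1, ht.2])
          (fun τ => U (s + t - τ) t x - U (s + t - τ) t y)
          (fun τ => (-(1:ℝ)) • (v (s + t - τ) (U (s + t - τ) t x)
            - v (s + t - τ) (U (s + t - τ) t y)))
          (fun τ hτ => by
            have hσ : s + t - τ ∈ Icc (0:ℝ) T :=
              ⟨by linarith [hs.1, hτ.2], by linarith [ht.2, hτ.1]⟩
            have hinner : HasDerivAt (fun τ : ℝ => s + t - τ) (-1) τ := by
              simpa using ((hasDerivAt_id τ).const_sub (s + t))
            have hx' : HasDerivAt (fun τ : ℝ => U (s + t - τ) t x)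
                ((-1 : ℝ) • v (s + t - τ) (U (s + t - τ) t x)) τ :=
              HasDerivAt.scomp τ (hU_ode t ht x (s + t - τ) hσ) hinner
            have hy' : HasDerivAt (fun τ : ℝ => U (s + t - τ) t y)
                ((-1 : ℝ) • v (s + t - τ) (U (s + t - τ) t y)) τ :=
              HasDerivAt.scomp τ (hU_ode t ht y (s + t - τ) hσ) hinner
            have := hx'.sub hy'
            convert this using 1
            · rfl
            simp [smul_sub])
          (by
            simp only [add_sub_cancel_left]
            rw [hU_init t ht x, hU_init t ht y, ← dist_eq_norm])
          (fun τ hτ hpos hle => by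
            have hσ : s + t - τ ∈ Icc (0:ℝ) T :=
              ⟨by linarith [hs.1, hτ.2.le], by linarith [ht.2, hτ.1]⟩
            have hv := hv_loglip (s + t - τ) hσ (U (s + t - τ) t x) (U (s + t - τ) t y)
              (by rwa [dist_eq_norm]) (by rwa [dist_eq_norm])
            rw [norm_smul]
            simpa [dist_eq_norm] using hv)
          (by rw [← hδ]; exact hcase)
        simp only [add_sub_cancel_right] at h
        rw [← dist_eq_norm, ← hδ] at h
        nlinarith [h, mul_nonneg (mul_nonneg (Real.exp_pos 1).le hBT) hdpow.le]
    · push_neg at hcase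
      have hd1 : d ≤ 1 := hxy1
      nlinarith [hub, hcase]
end
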